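/- (Extremality of the logarithmic potential for the annulus.) Let 0 < r < R and let v : ℂ → ℝ be continuous on the closed annulus {r ≤ |z| ≤ R}, continuously differentiable on the open annulus A(r,R), with v = −1 on the circle {|z| = r} and v = +1 on the circle {|z| = R}. Then ∫_{A(r,R)} ‖∇v(z)‖² dA(z) ≥ 8π/log(R/r), i.e. the Dirichlet energy of v is at least that of the extremal function u(z) = 2·log(|z|/r)/log(R/r) − 1. -/

import Mathlib

open MeasureTheory Set Real
open scoped ENNReal

private lemma radial_bound {r R : ℝ} (hr : 0 < r) (hrR : r < R) {v : ℂ → ℝ}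
    (hc : ContinuousOn v {z : ℂ | r ≤ ‖z‖ ∧ ‖z‖ ≤ R})
    (hd : ContDiffOn ℝ 1 v {z : ℂ | r < ‖z‖ ∧ ‖z‖ < R})
    (hbr : ∀ z : ℂ, ‖z‖ = r → v z = -1)
    (hbR : ∀ z : ℂ, ‖z‖ = R → v z = 1)
    (e : ℂ) (he : ‖e‖ = 1) :
    ENNReal.ofReal (4 / Real.log (R / r)) ≤
      ∫⁻ ρ in Set.Ioo r R,
        ENNReal.ofReal ρ * ENNReal.ofReal ((fderiv ℝ v ((ρ : ℂ) * e)) e ^ 2) := by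
  set A : Set ℂ := {z : ℂ | r < ‖z‖ ∧ ‖z‖ < R} with hA_def
  have hA : IsOpen A := by
    have : A = (fun z : ℂ => ‖z‖) ⁻¹' (Ioi r) ∩ (fun z : ℂ => ‖z‖) ⁻¹' (Iio R) := rfl
    rw [this]
    exact (isOpen_Ioi.preimage continuous_norm).inter
      (isOpen_Iio.preimage continuous_norm)
  set L : ℝ := Real.log (R / r) with hL_def
  have hL : 0 < L := Real.log_pos ((one_lt_div hr).2 hrR)
  set g : ℝ → ℝ := fun ρ => (fderiv ℝ v ((ρ : ℂ) * e)) e with hg_def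
  set φ : ℝ → ℝ := fun ρ => v ((ρ : ℂ) * e) with hφ_def
  have habs : ∀ ρ : ℝ, 0 ≤ ρ → ‖(ρ : ℂ) * e‖ = ρ := by
    intro ρ hρ
    rw [norm_mul, Complex.norm_real, Real.norm_eq_abs, he, mul_one, abs_of_nonneg hρ]
  have hmem : ∀ ρ ∈ Ioo r R, ((ρ : ℂ) * e) ∈ A := by
    intro ρ hρ
    have h0 : (0:ℝ) ≤ ρ := le_of_lt (hr.trans hρ.1)
    exact ⟨by rw [habs ρ h0]; exact hρ.1, by rw [habs ρ h0]; exact hρ.2⟩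
  have hzc : Continuous fun ρ : ℝ => (ρ : ℂ) * e :=
    (Complex.continuous_ofReal).mul continuous_const
  have hgc : ContinuousOn g (Ioo r R) := by
    have hfc : ContinuousOn (fderiv ℝ v) A :=
      hd.continuousOn_fderiv_of_isOpen hA le_rfl
    exact (hfc.comp hzc.continuousOn hmem).clm_apply continuousOn_const
  have hderiv : ∀ ρ ∈ Ioo r R, HasDerivAt φ (g ρ) ρ := by
    intro ρ hρ
    have hm : HasDerivAt (fun ρ : ℝ => (ρ : ℂ) * e) e ρ := by
      simpa using (Complex.ofRealCLM.hasDerivAt (x := ρ)).mul_const e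
    have hv : HasFDerivAt v (fderiv ℝ v ((ρ : ℂ) * e)) ((ρ : ℂ) * e) :=
      ((hd.differentiableOn one_ne_zero).differentiableAt
        (hA.mem_nhds (hmem ρ hρ))).hasFDerivAt
    exact hv.comp_hasDerivAt ρ hm
  have hφc : ContinuousOn φ (Icc r R) := by
    apply hc.comp hzc.continuousOn
    intro ρ hρ
    have h0 : (0:ℝ) ≤ ρ := le_trans hr.le hρ.1
    exact ⟨by rw [habs ρ h0]; exact hρ.1, by rw [habs ρ h0]; exact hρ.2⟩
  have hφr : φ r = -1 := hbr _ (habs r hr.le)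
  have hφR : φ R = 1 := hbR _ (habs R (hr.trans hrR).le)
  set J : ℝ≥0∞ := ∫⁻ ρ in Set.Ioo r R,
      ENNReal.ofReal ρ * ENNReal.ofReal (g ρ ^ 2) with hJ_def
  show ENNReal.ofReal (4 / L) ≤ J
  by_cases hJtop : J = ⊤
  · simp [hJtop]
  -- Cauchy-Schwarz
  have hgm : AEMeasurable g (volume.restrict (Ioo r R)) :=
    hgc.aemeasurable measurableSet_Ioo
  have hCS : ∫⁻ ρ in Ioo r R, ENNReal.ofReal |g ρ| ≤
      J ^ (1/2 : ℝ) * (ENNReal.ofReal L) ^ (1/2 : ℝ) := by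
    have hpq : (2:ℝ).HolderConjugate 2 := Real.holderConjugate_iff.mpr ⟨one_lt_two, by norm_num⟩
    have hf : AEMeasurable (fun ρ => ENNReal.ofReal (|g ρ| * Real.sqrt ρ))
        (volume.restrict (Ioo r R)) :=
      (((continuous_abs.measurable.comp_aemeasurable hgm)).mul Real.continuous_sqrt.aemeasurable).ennreal_ofReal
    have hgf : AEMeasurable (fun ρ : ℝ => ENNReal.ofReal (Real.sqrt ρ)⁻¹)
        (volume.restrict (Ioo r R)) :=
      (Real.continuous_sqrt.aemeasurable.inv).ennreal_ofReal
    have key := ENNReal.lintegral_mul_le_Lp_mul_Lq (volume.restrict (Ioo r R)) hpq hf hgf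
    have h1 : ∫⁻ ρ in Ioo r R, ENNReal.ofReal |g ρ| =
        ∫⁻ ρ in Ioo r R, (fun ρ => ENNReal.ofReal (|g ρ| * Real.sqrt ρ)) ρ *
          (fun ρ : ℝ => ENNReal.ofReal (Real.sqrt ρ)⁻¹) ρ := by
      apply setLIntegral_congr_fun measurableSet_Ioo
      intro ρ hρ
      dsimp only
      have h0 : 0 < ρ := hr.trans hρ.1
      rw [← ENNReal.ofReal_mul (by positivity)]
      congr 1
      rw [mul_assoc, mul_inv_cancel₀ (by positivity), mul_one]
    have h2 : ∫⁻ ρ in Ioo r R, (ENNReal.ofReal (|g ρ| * Real.sqrt ρ)) ^ (2:ℝ) = J := by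
      apply setLIntegral_congr_fun measurableSet_Ioo
      intro ρ hρ
      dsimp only
      have h0 : 0 < ρ := hr.trans hρ.1
      rw [show ((2:ℝ)) = ((2:ℕ):ℝ) by norm_num, ENNReal.rpow_natCast,
        ← ENNReal.ofReal_pow (by positivity), ← ENNReal.ofReal_mul h0.le]
      congr 1
      rw [mul_pow, sq_abs, Real.sq_sqrt h0.le]
      ring
    have h3 : ∫⁻ ρ in Ioo r R, (ENNReal.ofReal (Real.sqrt ρ)⁻¹) ^ (2:ℝ) =
        ENNReal.ofReal L := by
      have heq : ∫⁻ ρ in Ioo r R, (ENNReal.ofReal (Real.sqrt ρ)⁻¹) ^ (2:ℝ) =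
          ∫⁻ ρ in Ioo r R, ENNReal.ofReal ρ⁻¹ := by
        apply setLIntegral_congr_fun measurableSet_Ioo
        intro ρ hρ
        dsimp only
        have h0 : 0 < ρ := hr.trans hρ.1
        rw [show ((2:ℝ)) = ((2:ℕ):ℝ) by norm_num, ENNReal.rpow_natCast,
          ← ENNReal.ofReal_pow (by positivity)]
        congr 1
        rw [inv_pow, Real.sq_sqrt h0.le]
      rw [heq, setLIntegral_congr Ioo_ae_eq_Ioc]
      have hInt : IntegrableOn (fun ρ : ℝ => ρ⁻¹) (Ioc r R) := by
        apply (ContinuousOn.integrableOn_compact isCompact_Icc ?_).mono_set Ioc_subset_Icc_self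
        exact continuousOn_inv₀.mono fun x hx => ne_of_gt (lt_of_lt_of_le hr hx.1)
      rw [← ofReal_integral_eq_lintegral_ofReal hInt]
      · congr 1
        rw [← intervalIntegral.integral_of_le hrR.le, integral_inv]
        intro h
        rcases h with ⟨h1', h2'⟩
        simp only [inf_le_iff] at h1'
        rcases h1' with h | h <;> linarith
      · filter_upwards [self_mem_ae_restrict measurableSet_Ioc] with ρ hρ
        exact inv_nonneg.2 (hr.trans hρ.1).le
    calc ∫⁻ ρ in Ioo r R, ENNReal.ofReal |g ρ|
        = ∫⁻ ρ in Ioo r R, (fun ρ => ENNReal.ofReal (|g ρ| * Real.sqrt ρ)) ρ *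
          (fun ρ : ℝ => ENNReal.ofReal (Real.sqrt ρ)⁻¹) ρ := h1
      _ ≤ (∫⁻ ρ in Ioo r R, (ENNReal.ofReal (|g ρ| * Real.sqrt ρ)) ^ (2:ℝ)) ^ (1/2:ℝ) *
          (∫⁻ ρ in Ioo r R, (ENNReal.ofReal (Real.sqrt ρ)⁻¹) ^ (2:ℝ)) ^ (1/2:ℝ) := key
      _ = J ^ (1/2:ℝ) * (ENNReal.ofReal L) ^ (1/2:ℝ) := by rw [h2, h3]
  -- integrability of g
  have hfin : ∫⁻ ρ in Ioo r R, ENNReal.ofReal |g ρ| < ⊤ :=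
    lt_of_le_of_lt hCS (ENNReal.mul_lt_top
      (ENNReal.rpow_lt_top_of_nonneg (by norm_num) hJtop)
      (ENNReal.rpow_lt_top_of_nonneg (by norm_num) ENNReal.ofReal_ne_top))
  have hgint : IntegrableOn g (Ioo r R) := by
    refine ⟨hgm.aestronglyMeasurable, ?_⟩
    rw [hasFiniteIntegral_iff_norm]
    simpa only [Real.norm_eq_abs] using hfin
  have hgiv : IntervalIntegrable g volume r R := by
    rw [intervalIntegrable_iff_integrableOn_Ioo_of_le hrR.le]
    exact hgint
  have hFTC : ∫ ρ in r..R, g ρ = 2 := by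
    rw [intervalIntegral.integral_eq_sub_of_hasDeriv_right_of_le hrR.le hφc
      (fun x hx => (hderiv x hx).hasDerivWithinAt) hgiv, hφR, hφr]
    norm_num
  have h2le : (2:ℝ) ≤ ∫ ρ in Ioo r R, |g ρ| := by
    have := intervalIntegral.abs_integral_le_integral_abs (μ := volume) (f := g) hrR.le
    rw [hFTC] at this
    have h2 : |(2:ℝ)| = 2 := by norm_num
    rw [h2] at this
    calc (2:ℝ) ≤ ∫ ρ in r..R, |g ρ| := this
      _ = ∫ ρ in Ioc r R, |g ρ| := intervalIntegral.integral_of_le hrR.le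
      _ = ∫ ρ in Ioo r R, |g ρ| := by
          exact (setIntegral_congr_set Ioo_ae_eq_Ioc).symm
  have h2le' : ENNReal.ofReal 2 ≤ ∫⁻ ρ in Ioo r R, ENNReal.ofReal |g ρ| := by
    rw [← ofReal_integral_eq_lintegral_ofReal hgint.abs
      (Filter.Eventually.of_forall fun ρ => abs_nonneg _)]
    exact ENNReal.ofReal_le_ofReal h2le
  -- conclude
  have hsq : ENNReal.ofReal 4 ≤ J * ENNReal.ofReal L := by
    have hX : ENNReal.ofReal 2 ≤ J ^ (1/2:ℝ) * (ENNReal.ofReal L) ^ (1/2:ℝ) :=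
      le_trans h2le' hCS
    have := mul_le_mul' hX hX
    calc ENNReal.ofReal 4 = ENNReal.ofReal 2 * ENNReal.ofReal 2 := by
          rw [← ENNReal.ofReal_mul (by norm_num)]; norm_num
      _ ≤ (J ^ (1/2:ℝ) * (ENNReal.ofReal L) ^ (1/2:ℝ)) *
          (J ^ (1/2:ℝ) * (ENNReal.ofReal L) ^ (1/2:ℝ)) := this
      _ = (J ^ (1/2:ℝ) * J ^ (1/2:ℝ)) *
          ((ENNReal.ofReal L) ^ (1/2:ℝ) * (ENNReal.ofReal L) ^ (1/2:ℝ)) := by ring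
      _ = J * ENNReal.ofReal L := by
          rw [← ENNReal.rpow_add_of_nonneg _ _ (by norm_num) (by norm_num),
            ← ENNReal.rpow_add_of_nonneg _ _ (by norm_num) (by norm_num)]
          norm_num
  have : ENNReal.ofReal (4 / L) = ENNReal.ofReal 4 / ENNReal.ofReal L := by
    rw [ENNReal.ofReal_div_of_pos hL]
  rw [this]
  exact ENNReal.div_le_of_le_mul hsq

/-- extremality of the logarithmic potential: For `0 < r < R`, if
`v : ℂ → ℝ` is continuous on the closed annulus `{r ≤ |z| ≤ R}`, continuously
differentiable on the open annulus `A(r,R)`, with `v = −1` on `{|z| = r}` and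
`v = +1` on `{|z| = R}`, then the Dirichlet energy of `v` on `A(r,R)` is at least
`8π/log(R/r)`.  (The energy is taken as a lower Lebesgue integral so that the
statement is meaningful also when the energy is infinite.) -/
theorem stmt_4 (r R : ℝ) (hr : 0 < r) (hrR : r < R) (v : ℂ → ℝ)
    (hc : ContinuousOn v {z : ℂ | r ≤ ‖z‖ ∧ ‖z‖ ≤ R})
    (hd : ContDiffOn ℝ 1 v {z : ℂ | r < ‖z‖ ∧ ‖z‖ < R})
    (hbr : ∀ z : ℂ, ‖z‖ = r → v z = -1)
    (hbR : ∀ z : ℂ, ‖z‖ = R → v z = 1) :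
    ENNReal.ofReal (8 * Real.pi / Real.log (R / r)) ≤
      ∫⁻ z in {z : ℂ | r < ‖z‖ ∧ ‖z‖ < R},
        ENNReal.ofReal (‖fderiv ℝ v z‖ ^ 2) := by
  set A : Set ℂ := {z : ℂ | r < ‖z‖ ∧ ‖z‖ < R} with hA_def
  have hA : IsOpen A := by
    have : A = (fun z : ℂ => ‖z‖) ⁻¹' (Ioi r) ∩ (fun z : ℂ => ‖z‖) ⁻¹' (Iio R) := rfl
    rw [this]
    exact (isOpen_Ioi.preimage continuous_norm).inter
      (isOpen_Iio.preimage continuous_norm)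
  set L : ℝ := Real.log (R / r) with hL_def
  have hL : 0 < L := Real.log_pos ((one_lt_div hr).2 hrR)
  set T : Set (ℝ × ℝ) := Ioo r R ×ˢ Ioo (-π) π with hT_def
  have hT_meas : MeasurableSet T := measurableSet_Ioo.prod measurableSet_Ioo
  set m := Complex.measurableEquivRealProd with hm_def
  set u : ℝ → ℂ := fun θ => (Real.cos θ : ℂ) + (Real.sin θ : ℂ) * Complex.I with hu_def
  have hu_abs : ∀ θ, ‖u θ‖ = 1 := by
    intro θ
    rw [hu_def]
    rw [Complex.norm_def, Complex.normSq_add_mul_I, Real.cos_sq_add_sin_sq, Real.sqrt_one]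
  have hms : ∀ p : ℝ × ℝ, m.symm (polarCoord.symm p) = Complex.polarCoord.symm p :=
    fun p => rfl
  have hw : ∀ p : ℝ × ℝ, m.symm (polarCoord.symm p) = (p.1 : ℂ) * u p.2 := by
    intro p
    rw [hms p, Complex.polarCoord_symm_apply]
  -- step 1
  have h1 : (∫⁻ z in A, ENNReal.ofReal (‖fderiv ℝ v z‖ ^ 2)) =
      ∫⁻ q in m.symm ⁻¹' A, ENNReal.ofReal (‖fderiv ℝ v (m.symm q)‖ ^ 2) :=
    ((Complex.volume_preserving_equiv_real_prod.symm m).setLIntegral_comp_preimage_emb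
      m.symm.measurableEmbedding _ A).symm
  -- step 2
  have himg_sub : polarCoord.symm '' T ⊆ m.symm ⁻¹' A := by
    rintro q ⟨p, hp, rfl⟩
    have habs : ‖m.symm (polarCoord.symm p)‖ = p.1 := by
      rw [hms p, Complex.norm_polarCoord_symm, abs_of_pos (hr.trans hp.1.1)]
    exact ⟨by rw [habs]; exact hp.1.1, by rw [habs]; exact hp.1.2⟩
  have hsub2 : m.symm ⁻¹' A \ polarCoord.symm '' T ⊆ {q : ℝ × ℝ | q.2 = 0} := by
    rintro q ⟨hqA, hq2⟩
    by_contra h2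
    apply hq2
    have hqsrc : q ∈ polarCoord.source := Or.inr h2
    refine ⟨polarCoord q, ?_, polarCoord.left_inv hqsrc⟩
    have htgt := polarCoord.map_source hqsrc
    rw [polarCoord_target] at htgt
    have habs : (polarCoord q).1 = ‖m.symm q‖ := by
      have e1 : Complex.polarCoord (m.symm q) = polarCoord (m (m.symm q)) := rfl
      have e2 : m (m.symm q) = q := m.apply_symm_apply q
      have := Complex.polarCoord_apply (m.symm q)
      rw [e1, e2] at this
      rw [this]
    exact ⟨⟨by rw [habs]; exact hqA.1, by rw [habs]; exact hqA.2⟩, htgt.2⟩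
  have hnull : volume {q : ℝ × ℝ | q.2 = 0} = 0 := by
    have : {q : ℝ × ℝ | q.2 = 0} = (Set.univ : Set ℝ) ×ˢ ({0} : Set ℝ) := by
      ext q
      simp only [Set.mem_setOf_eq, Set.mem_prod, Set.mem_univ, Set.mem_singleton_iff, true_and]
    rw [this, Measure.volume_eq_prod, Measure.prod_prod, Real.volume_singleton, mul_zero]
  have hae : (m.symm ⁻¹' A : Set (ℝ × ℝ)) =ᵐ[volume] polarCoord.symm '' T := by
    rw [MeasureTheory.ae_eq_set]
    constructor
    · exact measure_mono_null hsub2 hnull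
    · rw [Set.diff_eq_empty.2 himg_sub]; exact measure_empty
  have h2 : (∫⁻ q in m.symm ⁻¹' A, ENNReal.ofReal (‖fderiv ℝ v (m.symm q)‖ ^ 2)) =
      ∫⁻ q in polarCoord.symm '' T, ENNReal.ofReal (‖fderiv ℝ v (m.symm q)‖ ^ 2) :=
    setLIntegral_congr hae
  -- step 3: Jacobian
  set B : ℝ × ℝ → ℝ × ℝ →L[ℝ] ℝ × ℝ := fun p =>
    LinearMap.toContinuousLinearMap (Matrix.toLin (Module.Basis.finTwoProd ℝ) (Module.Basis.finTwoProd ℝ)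
      !![Real.cos p.2, -p.1 * Real.sin p.2; Real.sin p.2, p.1 * Real.cos p.2]) with hB_def
  have hBdet : ∀ p, (B p).det = p.1 := by
    intro p
    conv_rhs => rw [← one_mul p.1, ← cos_sq_add_sin_sq p.2]
    simp only [hB_def, neg_mul, LinearMap.det_toContinuousLinearMap, LinearMap.det_toLin,
      Matrix.det_fin_two_of, sub_neg_eq_add]
    ring
  have hTsub : T ⊆ polarCoord.symm.source := by
    rw [OpenPartialHomeomorph.symm_source, polarCoord_target]
    rintro p ⟨h1', h2'⟩
    exact ⟨mem_Ioi.2 (hr.trans h1'.1), h2'⟩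
  have hinj : Set.InjOn polarCoord.symm T := polarCoord.symm.injOn.mono hTsub
  have h3 : (∫⁻ q in polarCoord.symm '' T, ENNReal.ofReal (‖fderiv ℝ v (m.symm q)‖ ^ 2)) =
      ∫⁻ p in T, ENNReal.ofReal |(B p).det| *
        ENNReal.ofReal (‖fderiv ℝ v (m.symm (polarCoord.symm p))‖ ^ 2) :=
    lintegral_image_eq_lintegral_abs_det_fderiv_mul volume hT_meas
      (fun p _ => (hasFDerivAt_polarCoord_symm p).hasFDerivWithinAt) hinj _
  -- step 4: pointwise bound
  have h4 : (∫⁻ p in T, ENNReal.ofReal p.1 *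
        ENNReal.ofReal ((fderiv ℝ v ((p.1 : ℂ) * u p.2)) (u p.2) ^ 2)) ≤
      ∫⁻ p in T, ENNReal.ofReal |(B p).det| *
        ENNReal.ofReal (‖fderiv ℝ v (m.symm (polarCoord.symm p))‖ ^ 2) := by
    apply lintegral_mono
    intro p
    dsimp only
    rw [hw p, hBdet p]
    apply mul_le_mul'
    · exact ENNReal.ofReal_le_ofReal (le_abs_self p.1)
    · apply ENNReal.ofReal_le_ofReal
      set D := fderiv ℝ v ((p.1 : ℂ) * u p.2)
      have h := D.le_opNorm (u p.2)
      rw [hu_abs p.2, mul_one] at h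
      calc D (u p.2) ^ 2 = |D (u p.2)| ^ 2 := (sq_abs _).symm
        _ ≤ ‖D‖ ^ 2 := by
            apply pow_le_pow_left₀ (abs_nonneg _)
            rwa [← Real.norm_eq_abs]
  -- step 5: Tonelli
  have hmeq : (volume : Measure (ℝ × ℝ)).restrict T =
      (volume.restrict (Ioo r R)).prod (volume.restrict (Ioo (-π) π)) := by
    rw [hT_def, Measure.volume_eq_prod, Measure.prod_restrict]
  have hFmeas : AEMeasurable (fun p : ℝ × ℝ => ENNReal.ofReal p.1 *
      ENNReal.ofReal ((fderiv ℝ v ((p.1 : ℂ) * u p.2)) (u p.2) ^ 2))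
      ((volume.restrict (Ioo r R)).prod (volume.restrict (Ioo (-π) π))) := by
    rw [← hmeq]
    have hfc : ContinuousOn (fderiv ℝ v) A :=
      hd.continuousOn_fderiv_of_isOpen hA le_rfl
    have huc : Continuous fun p : ℝ × ℝ => u p.2 := by
      simp only [hu_def]
      fun_prop
    have hzc : Continuous fun p : ℝ × ℝ => (p.1 : ℂ) * u p.2 :=
      (Complex.continuous_ofReal.comp continuous_fst).mul huc
    have hmap : MapsTo (fun p : ℝ × ℝ => (p.1 : ℂ) * u p.2) T A := by
      intro p hp
      have h0 : (0:ℝ) < p.1 := hr.trans hp.1.1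
      have : ‖(p.1 : ℂ) * u p.2‖ = p.1 := by
        rw [norm_mul, Complex.norm_real, Real.norm_eq_abs, hu_abs, mul_one, abs_of_pos h0]
      exact ⟨by dsimp only; rw [this]; exact hp.1.1, by dsimp only; rw [this]; exact hp.1.2⟩
    have hXc : ContinuousOn (fun p : ℝ × ℝ => (fderiv ℝ v ((p.1 : ℂ) * u p.2)) (u p.2)) T :=
      (hfc.comp hzc.continuousOn hmap).clm_apply huc.continuousOn
    have hXm : AEMeasurable (fun p : ℝ × ℝ => (fderiv ℝ v ((p.1 : ℂ) * u p.2)) (u p.2))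
        (volume.restrict T) := hXc.aemeasurable hT_meas
    exact (measurable_fst.ennreal_ofReal.aemeasurable).mul
      ((hXm.pow_const 2).ennreal_ofReal)
  have h5 : (∫⁻ p in T, ENNReal.ofReal p.1 *
        ENNReal.ofReal ((fderiv ℝ v ((p.1 : ℂ) * u p.2)) (u p.2) ^ 2)) =
      ∫⁻ θ in Ioo (-π) π, ∫⁻ ρ in Ioo r R, ENNReal.ofReal ρ *
        ENNReal.ofReal ((fderiv ℝ v ((ρ : ℂ) * u θ)) (u θ) ^ 2) := by
    rw [hmeq]
    exact lintegral_prod_symm _ hFmeas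
  -- step 6: radial bound
  have h6 : (ENNReal.ofReal (4 / L) * ENNReal.ofReal (2 * π)) ≤
      ∫⁻ θ in Ioo (-π) π, ∫⁻ ρ in Ioo r R, ENNReal.ofReal ρ *
        ENNReal.ofReal ((fderiv ℝ v ((ρ : ℂ) * u θ)) (u θ) ^ 2) := by
    have : ∀ θ : ℝ, ENNReal.ofReal (4 / L) ≤
        ∫⁻ ρ in Ioo r R, ENNReal.ofReal ρ *
          ENNReal.ofReal ((fderiv ℝ v ((ρ : ℂ) * u θ)) (u θ) ^ 2) :=
      fun θ => radial_bound hr hrR hc hd hbr hbR (u θ) (hu_abs θ)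
    calc ENNReal.ofReal (4 / L) * ENNReal.ofReal (2 * π)
        = ∫⁻ _ in Ioo (-π) π, ENNReal.ofReal (4 / L) := by
          rw [setLIntegral_const, Real.volume_Ioo]
          congr 1
          ring_nf
      _ ≤ _ := lintegral_mono fun θ => this θ
  have hfinal : ENNReal.ofReal (8 * π / L) =
      ENNReal.ofReal (4 / L) * ENNReal.ofReal (2 * π) := by
    rw [← ENNReal.ofReal_mul (by positivity)]
    congr 1
    field_simp
    ring
  calc ENNReal.ofReal (8 * π / L) = ENNReal.ofReal (4 / L) * ENNReal.ofReal (2 * π) := hfinal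
    _ ≤ _ := h6
    _ = ∫⁻ p in T, ENNReal.ofReal p.1 *
        ENNReal.ofReal ((fderiv ℝ v ((p.1 : ℂ) * u p.2)) (u p.2) ^ 2) := h5.symm
    _ ≤ ∫⁻ p in T, ENNReal.ofReal |(B p).det| *
        ENNReal.ofReal (‖fderiv ℝ v (m.symm (polarCoord.symm p))‖ ^ 2) := h4
    _ = ∫⁻ q in polarCoord.symm '' T, ENNReal.ofReal (‖fderiv ℝ v (m.symm q)‖ ^ 2) := h3.symm
    _ = ∫⁻ q in m.symm ⁻¹' A, ENNReal.ofReal (‖fderiv ℝ v (m.symm q)‖ ^ 2) := h2.symm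
    _ = _ := h1.symm
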